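/- Let p, p̃ : [0,1] → ℝ be continuous and strictly positive, let λ, λ̃ ∈ ℝ with λ̃ ≠ 0, and let ũ : [0,1] → ℝ be twice continuously differentiable, not identically zero, with −ũ''(x) = λ̃·p̃(x)·ũ(x) for all x ∈ [0,1]. If λ · ∫₀¹ ũ(x)² dx = λ̃ · ∫₀¹ ( p̃(x)/p(x) ) · ũ(x)² dx and λ = λ̃ · max_{x ∈ [0,1]} ( p̃(x)/p(x) ), then λ ≠ 0 and p(x) = (λ̃/λ)·p̃(x) for all x ∈ [0,1]. -/

import Mathlib

open Real

private lemma exists_subIcc {x δ : ℝ} (hx : x ∈ Set.Icc (0:ℝ) 1) (hδ : 0 < δ) :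
    ∃ a b : ℝ, 0 ≤ a ∧ a < b ∧ b ≤ 1 ∧
      Set.Icc a b ⊆ Metric.ball x δ ∩ Set.Icc (0:ℝ) 1 := by
  obtain ⟨hx0, hx1⟩ := hx
  refine ⟨max 0 (x - δ/2), min 1 (x + δ/2), le_max_left _ _, ?_, min_le_left _ _, ?_⟩
  · apply max_lt <;> apply lt_min <;> linarith
  · intro y hy
    obtain ⟨hya, hyb⟩ := hy
    have h1 : x - δ/2 ≤ y := le_trans (le_max_right _ _) hya
    have h2 : y ≤ x + δ/2 := le_trans hyb (min_le_right _ _)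
    have h0 : 0 ≤ y := le_trans (le_max_left _ _) hya
    have h3 : y ≤ 1 := le_trans hyb (min_le_left _ _)
    refine ⟨?_, h0, h3⟩
    rw [Metric.mem_ball, Real.dist_eq, abs_lt]
    constructor <;> linarith

private lemma zero_of_integral_zero (h : ℝ → ℝ) (hc : ContinuousOn h (Set.Icc 0 1))
    (hnn : ∀ x ∈ Set.Icc (0:ℝ) 1, 0 ≤ h x) (hi : (∫ x in (0:ℝ)..1, h x) = 0) :
    ∀ x ∈ Set.Icc (0:ℝ) 1, h x = 0 := by
  by_contra hcon
  push_neg at hcon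
  obtain ⟨x, hx, hxne⟩ := hcon
  have hxpos : 0 < h x := lt_of_le_of_ne (hnn x hx) (Ne.symm hxne)
  -- find a neighborhood where h > h x / 2
  have hev : {y | h x / 2 < h y} ∈ nhdsWithin x (Set.Icc (0:ℝ) 1) := by
    have := hc x hx (Iio_mem_nhds (show h x < h x + h x / 2 by linarith))
    exact hc x hx (Ioi_mem_nhds (by linarith : h x / 2 < h x))
  rw [Metric.mem_nhdsWithin_iff] at hev
  obtain ⟨δ, hδ, hball⟩ := hev
  obtain ⟨a, b, ha0, hab, hb1, hsub⟩ := exists_subIcc hx hδ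
  have hsub' : Set.Icc a b ⊆ Set.Icc (0:ℝ) 1 := fun y hy => (hsub hy).2
  have hgt : ∀ y ∈ Set.Icc a b, h x / 2 ≤ h y := fun y hy => le_of_lt (hball (hsub hy))
  have hint01 : IntervalIntegrable h MeasureTheory.volume 0 1 := by
    apply ContinuousOn.intervalIntegrable
    rwa [Set.uIcc_of_le (zero_le_one)]
  have hintab : IntervalIntegrable h MeasureTheory.volume a b := by
    apply ContinuousOn.intervalIntegrable
    rw [Set.uIcc_of_le hab.le]
    exact hc.mono hsub'
  have hint0a : IntervalIntegrable h MeasureTheory.volume 0 a := by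
    apply ContinuousOn.intervalIntegrable
    rw [Set.uIcc_of_le ha0]
    exact hc.mono (Set.Icc_subset_Icc le_rfl (le_trans hab.le hb1))
  have hintb1 : IntervalIntegrable h MeasureTheory.volume b 1 := by
    apply ContinuousOn.intervalIntegrable
    rw [Set.uIcc_of_le hb1]
    exact hc.mono (Set.Icc_subset_Icc (le_trans ha0 hab.le) le_rfl)
  have hsplit : (∫ y in (0:ℝ)..a, h y) + ((∫ y in a..b, h y) + ∫ y in b..1, h y)
      = ∫ y in (0:ℝ)..1, h y := by
    rw [intervalIntegral.integral_add_adjacent_intervals hintab hintb1,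
      intervalIntegral.integral_add_adjacent_intervals hint0a (hintab.trans hintb1)]
  have h0a : 0 ≤ ∫ y in (0:ℝ)..a, h y :=
    intervalIntegral.integral_nonneg ha0 (fun u hu =>
      hnn u ⟨hu.1, le_trans hu.2 (le_trans hab.le hb1)⟩)
  have hb1' : 0 ≤ ∫ y in b..1, h y :=
    intervalIntegral.integral_nonneg hb1 (fun u hu =>
      hnn u ⟨le_trans (le_trans ha0 hab.le) hu.1, hu.2⟩)
  have hmid : (b - a) * h x / 2 ≤ ∫ y in a..b, h y := by
    have := intervalIntegral.integral_mono_on hab.le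
      (intervalIntegrable_const (c := h x / 2)) hintab hgt
    simpa using this
  have : 0 < ∫ y in (0:ℝ)..1, h y := by
    rw [← hsplit]
    have : 0 < (b - a) * h x / 2 := by
      have := mul_pos (sub_pos.mpr hab) hxpos
      linarith
    linarith
  linarith [hi]

/-- Theorem 2.3: Ambarzumyan-type theorem for an arbitrary (n-th) eigenvalue
of the vibrating string equation. -/
theorem stmt_6 (p pt : ℝ → ℝ) (hp : Continuous p) (hpt : Continuous pt)
    (hppos : ∀ x ∈ Set.Icc (0:ℝ) 1, 0 < p x)
    (hptpos : ∀ x ∈ Set.Icc (0:ℝ) 1, 0 < pt x)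
    (l lt : ℝ) (hlt : lt ≠ 0) (ut : ℝ → ℝ) (hut : ContDiff ℝ 2 ut)
    (hne : ¬ ∀ x ∈ Set.Icc (0:ℝ) 1, ut x = 0)
    (htode : ∀ x ∈ Set.Icc (0:ℝ) 1, -(deriv (deriv ut) x) = lt * pt x * ut x)
    (hint : l * ∫ x in (0:ℝ)..1, (ut x) ^ 2 =
            lt * ∫ x in (0:ℝ)..1, (pt x / p x) * (ut x) ^ 2)
    (M : ℝ) (hM : IsGreatest ((fun x => pt x / p x) '' Set.Icc (0:ℝ) 1) M)
    (hl : l = lt * M) :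
    l ≠ 0 ∧ ∀ x ∈ Set.Icc (0:ℝ) 1, p x = (lt / l) * pt x := by
  obtain ⟨hMmem, hMub⟩ := hM
  obtain ⟨xM, hxM, hMeq⟩ := hMmem
  have hMpos : 0 < M := hMeq ▸ div_pos (hptpos xM hxM) (hppos xM hxM)
  have hlne : l ≠ 0 := by rw [hl]; exact mul_ne_zero hlt (ne_of_gt hMpos)
  push_neg at hne
  obtain ⟨x₀, hx₀, hux₀⟩ := hne
  -- smoothness facts
  have hut' : ContDiff ℝ (1 + 1) ut := by
    convert hut using 2
    norm_num
  have hd1 : Differentiable ℝ ut := hut.differentiable two_ne_zero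
  have hd2 : ContDiff ℝ 1 (deriv ut) := (contDiff_succ_iff_deriv.mp hut').2.2
  have hd2' : Differentiable ℝ (deriv ut) := hd2.differentiable one_ne_zero
  have hdc2 : Continuous (deriv ut) := hd2.continuous
  -- ut does not vanish identically on any nondegenerate subinterval of [0,1]
  have hnovanish : ∀ a b : ℝ, 0 ≤ a → a < b → b ≤ 1 →
      ¬ (∀ y ∈ Set.Icc a b, ut y = 0) := by
    intro a b ha0 hab hb1 hvan
    set c := (a + b) / 2 with hc
    have hcab : c ∈ Set.Ioo a b := ⟨by rw [hc]; linarith, by rw [hc]; linarith⟩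
    have hc01 : c ∈ Set.Ioo (0:ℝ) 1 := ⟨lt_of_le_of_lt ha0 hcab.1, lt_of_lt_of_le hcab.2 hb1⟩
    have hev : ut =ᶠ[nhds c] (fun _ => 0) := by
      filter_upwards [Ioo_mem_nhds hcab.1 hcab.2] with y hy
      exact hvan y (Set.Ioo_subset_Icc_self hy)
    have hutc : ut c = 0 := hvan c (Set.Ioo_subset_Icc_self hcab)
    have hdc : deriv ut c = 0 := by
      rw [hev.deriv_eq]; simp
    -- bound on pt on [0,1]
    obtain ⟨C, hC⟩ := isCompact_Icc.exists_bound_of_continuousOn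
      (hpt.continuousOn (s := Set.Icc (0:ℝ) 1))
    have hC0 : 0 ≤ C := le_trans (norm_nonneg _) (hC 0 (by norm_num))
    set K' : ℝ := max 1 (|lt| * C) with hK'
    have hK'0 : 0 ≤ K' := le_trans zero_le_one (le_max_left _ _)
    set K : NNReal := Real.toNNReal K' with hKdef
    have hKcoe : (K : ℝ) = K' := Real.coe_toNNReal _ hK'0
    -- truncation of time to [0,1]
    set q : ℝ → ℝ := fun t => max 0 (min 1 t) with hqdef
    have hq : ∀ t, q t ∈ Set.Icc (0:ℝ) 1 :=
      fun t => ⟨le_max_left _ _, max_le zero_le_one (min_le_left _ _)⟩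
    have hqid : ∀ t ∈ Set.Ioo (0:ℝ) 1, q t = t := by
      intro t ht
      simp only [hqdef]
      rw [min_eq_right ht.2.le, max_eq_right ht.1.le]
    set v : ℝ → ℝ × ℝ → ℝ × ℝ := fun t z => (z.2, -(lt * pt (q t)) * z.1) with hvdef
    have hv : ∀ t, LipschitzOnWith K (v t) Set.univ := by
      intro t
      apply LipschitzWith.lipschitzOnWith
      apply LipschitzWith.of_dist_le_mul
      intro z w
      rw [hKcoe]
      have hct : |(-(lt * pt (q t)))| ≤ |lt| * C := by
        rw [abs_neg, abs_mul]
        exact mul_le_mul_of_nonneg_left (hC _ (hq t)) (abs_nonneg lt)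
      rw [Prod.dist_eq]
      have hd1w : dist z.1 w.1 ≤ dist z w := by rw [Prod.dist_eq]; exact le_max_left _ _
      have hd2w : dist z.2 w.2 ≤ dist z w := by rw [Prod.dist_eq]; exact le_max_right _ _
      apply max_le
      · calc dist (v t z).1 (v t w).1 = dist z.2 w.2 := rfl
          _ ≤ 1 * dist z w := by rw [one_mul]; exact hd2w
          _ ≤ K' * dist z w := by
              apply mul_le_mul_of_nonneg_right (le_max_left _ _) dist_nonneg
      · calc dist (v t z).2 (v t w).2
            = |(-(lt * pt (q t)))| * dist z.1 w.1 := by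
              simp only [hvdef, Real.dist_eq]
              rw [← abs_mul]; ring_nf
          _ ≤ (|lt| * C) * dist z w :=
              mul_le_mul hct hd1w dist_nonneg (by positivity)
          _ ≤ K' * dist z w :=
              mul_le_mul_of_nonneg_right (le_max_right _ _) dist_nonneg
    set f : ℝ → ℝ × ℝ := fun t => (ut t, deriv ut t) with hfdef
    have hfc : ContinuousOn f (Set.Icc 0 1) :=
      (hd1.continuous.prodMk hdc2).continuousOn
    have hf' : ∀ t ∈ Set.Ioo (0:ℝ) 1, HasDerivAt f (v t (f t)) t := by
      intro t ht
      have h1 : HasDerivAt ut (deriv ut t) t := (hd1 t).hasDerivAt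
      have h2 : HasDerivAt (deriv ut) (deriv (deriv ut) t) t := (hd2' t).hasDerivAt
      have hp2 := h1.prodMk h2
      convert hp2 using 1
      have ho := htode t (Set.Ioo_subset_Icc_self ht)
      simp only [hvdef, hfdef, hqid t ht]
      refine Prod.ext rfl ?_
      simp only
      linarith [ho]
    have hg' : ∀ t ∈ Set.Ioo (0:ℝ) 1,
        HasDerivAt (fun _ : ℝ => ((0:ℝ), (0:ℝ))) (v t ((0:ℝ), (0:ℝ))) t := by
      intro t ht
      have : v t ((0:ℝ), (0:ℝ)) = ((0:ℝ), (0:ℝ)) := by simp [hvdef]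
      rw [this]
      exact hasDerivAt_const t _
    have hfc0 : f c = ((0:ℝ), (0:ℝ)) := by
      simp [hfdef, hutc, hdc]
    have heq := ODE_solution_unique_of_mem_Icc (fun t _ => hv t) hc01 hfc hf'
      (fun _ _ => Set.mem_univ _) continuousOn_const hg'
      (fun _ _ => Set.mem_univ _) hfc0
    have := heq hx₀
    apply hux₀
    have : (ut x₀, deriv ut x₀) = ((0:ℝ), (0:ℝ)) := this
    exact congrArg Prod.fst this
  -- continuity of the ratio
  have hratc : ContinuousOn (fun x => pt x / p x) (Set.Icc (0:ℝ) 1) :=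
    hpt.continuousOn.div hp.continuousOn (fun x hx => (hppos x hx).ne')
  have hu2c : ContinuousOn (fun x => (ut x) ^ 2) (Set.Icc (0:ℝ) 1) :=
    (hd1.continuous.pow 2).continuousOn
  -- integral identity
  have hiu : IntervalIntegrable (fun x => (ut x) ^ 2) MeasureTheory.volume 0 1 :=
    ((hd1.continuous.pow 2)).intervalIntegrable 0 1
  have hir : IntervalIntegrable (fun x => (pt x / p x) * (ut x) ^ 2)
      MeasureTheory.volume 0 1 := by
    apply ContinuousOn.intervalIntegrable
    rw [Set.uIcc_of_le zero_le_one]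
    exact hratc.mul hu2c
  have hMint : M * ∫ x in (0:ℝ)..1, (ut x) ^ 2
      = ∫ x in (0:ℝ)..1, (pt x / p x) * (ut x) ^ 2 := by
    rw [hl, mul_assoc] at hint
    exact mul_left_cancel₀ hlt hint
  have hgzero : ∀ x ∈ Set.Icc (0:ℝ) 1, (M - pt x / p x) * (ut x) ^ 2 = 0 := by
    apply zero_of_integral_zero
    · exact (continuousOn_const.sub hratc).mul hu2c
    · intro x hx
      apply mul_nonneg _ (sq_nonneg _)
      have := hMub (Set.mem_image_of_mem _ hx)
      linarith
    · have : (∫ x in (0:ℝ)..1, (M - pt x / p x) * (ut x) ^ 2)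
          = (∫ x in (0:ℝ)..1, (M * (ut x) ^ 2 - (pt x / p x) * (ut x) ^ 2)) := by
        congr 1
        ext x
        ring
      rw [this, intervalIntegral.integral_sub (hiu.const_mul M) hir,
        intervalIntegral.integral_const_mul, hMint, sub_self]
  -- ratio is identically M
  have hrM : ∀ x ∈ Set.Icc (0:ℝ) 1, pt x / p x = M := by
    by_contra hcon
    push_neg at hcon
    obtain ⟨x1, hx1, hne1⟩ := hcon
    have hlt1 : pt x1 / p x1 < M :=
      lt_of_le_of_ne (hMub (Set.mem_image_of_mem _ hx1)) hne1
    have hev : {y | pt y / p y < M} ∈ nhdsWithin x1 (Set.Icc (0:ℝ) 1) :=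
      hratc x1 hx1 (Iio_mem_nhds hlt1)
    rw [Metric.mem_nhdsWithin_iff] at hev
    obtain ⟨δ, hδ, hball⟩ := hev
    obtain ⟨a, b, ha0, hab, hb1, hsub⟩ := exists_subIcc hx1 hδ
    apply hnovanish a b ha0 hab hb1
    intro y hy
    have hyin := hsub hy
    have hylt : pt y / p y < M := hball hyin
    have hy01 : y ∈ Set.Icc (0:ℝ) 1 := hyin.2
    have := hgzero y hy01
    have hfac : M - pt y / p y ≠ 0 := by linarith
    have : (ut y) ^ 2 = 0 := by
      rcases mul_eq_zero.mp this with h | h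
      · exact absurd h hfac
      · exact h
    exact pow_eq_zero_iff (by norm_num) |>.mp this
  refine ⟨hlne, fun x hx => ?_⟩
  have hr := hrM x hx
  have hpx : p x ≠ 0 := (hppos x hx).ne'
  rw [div_eq_iff hpx] at hr
  rw [hl, hr]
  field_simp
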